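/- Let p be a prime, let t ≥ r(p) =: r, and let f₂, f₃ ∈ {0,1} satisfy w₂(pᵗ) ≤ f₂ and w₃(pᵗ) ≤ f₃. Then: (i) if p^{t−r+2} ∤ c and p^{t−r+2} ∤ d, and E_{f₂,f₃}(c,d;pᵗ) ≠ 0, then there is an integer s ≥ 0 with gcd(c, pᵗ) = p^s = gcd(d, pᵗ), and in this case E_{f₂,f₃}(c,d;pᵗ) = p^s · E_{f₂,f₃}(c/p^s, d/p^s; p^{t−s}); (ii) if p^{t−r+2} ∣ c or p^{t−r+2} ∣ d, and E_{f₂,f₃}(c,d;pᵗ) ≠ 0, then p^{t−r+1} ∣ gcd(c, d), and in this case E_{f₂,f₃}(c,d;pᵗ) = p^{t−r+1} · E_{f₂,f₃}(c/p^{t−r+1}, d/p^{t−r+1}; p^{r−1}). -/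

import Mathlib

open scoped BigOperators

/-- `E(c,d;q) = Σ_{z mod q, gcd(z,q)=1} e((cz³ − dz²)/q)`, where `e(x) = exp(2πix)`. -/
noncomputable def expE (c d : ℤ) (q : ℕ) : ℂ :=
  ∑ z ∈ (Finset.range q).filter fun z => Nat.gcd z q = 1,
    Complex.exp (2 * Real.pi * Complex.I *
      (((c : ℂ) * (z : ℂ) ^ 3 - (d : ℂ) * (z : ℂ) ^ 2) / (q : ℂ)))

/-- `E_{f₂,f₃}(c,d;q) = E(2^{f₂} c, 3^{f₃} d; q)`. -/
noncomputable def expEff (f₂ f₃ : ℕ) (c d : ℤ) (q : ℕ) : ℂ :=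
  expE (2 ^ f₂ * c) (3 ^ f₃ * d) q

/-- `w₂(q) = 1` if `4 ∣ q`, else `0`. -/
def w2 (q : ℕ) : ℕ := if 4 ∣ q then 1 else 0

/-- `w₃(q) = 1` if `9 ∣ q`, else `0`. -/
def w3 (q : ℕ) : ℕ := if 9 ∣ q then 1 else 0

/-- `r(2) = 6`, `r(3) = 5`, `r(p) = 2` for `p > 3`. -/
def rfun (p : ℕ) : ℕ := if p = 2 then 6 else if p = 3 then 5 else 2


noncomputable def eZ (k : ℤ) (q : ℕ) : ℂ :=
  Complex.exp (2 * Real.pi * Complex.I * ((k : ℂ) / (q : ℂ)))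

lemma eZ_add (k l : ℤ) (q : ℕ) : eZ (k + l) q = eZ k q * eZ l q := by
  rw [eZ, eZ, eZ, ← Complex.exp_add]
  congr 1
  push_cast
  ring

lemma eZ_dvd {k : ℤ} {q : ℕ} (h : (q : ℤ) ∣ k) : eZ k q = 1 := by
  rcases eq_or_ne q 0 with rfl | hq
  · obtain rfl : k = 0 := by simpa using h
    simp [eZ]
  · obtain ⟨n, rfl⟩ := h
    have : ((((q : ℤ) * n : ℤ)) : ℂ) / (q : ℂ) = (n : ℂ) := by
      have : ((q : ℕ) : ℂ) ≠ 0 := by exact_mod_cast hq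
      field_simp
      simp
    rw [eZ, this]
    have := Complex.exp_int_mul_two_pi_mul_I n
    rw [← this]
    congr 1
    ring

lemma eZ_congr {k l : ℤ} {q : ℕ} (h : (q : ℤ) ∣ k - l) : eZ k q = eZ l q := by
  have : k = l + (k - l) := by ring
  rw [this, eZ_add, eZ_dvd h, mul_one]

lemma eZ_eq_one_iff {k : ℤ} {q : ℕ} (hq : q ≠ 0) : eZ k q = 1 ↔ (q : ℤ) ∣ k := by
  constructor
  · intro h
    rw [eZ, Complex.exp_eq_one_iff] at h
    obtain ⟨n, hn⟩ := h
    have hq' : ((q : ℕ) : ℂ) ≠ 0 := by exact_mod_cast hq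
    have h2 : (2 : ℂ) * Real.pi * Complex.I ≠ 0 := by
      simp [Real.pi_ne_zero, Complex.I_ne_zero]
    have hk : ((2:ℂ) * Real.pi * Complex.I) * (k : ℂ) = ((2:ℂ) * Real.pi * Complex.I) * ((n : ℂ) * (q : ℂ)) := by
      field_simp at hn
      linear_combination (2 * Real.pi * Complex.I) * hn
    have hk2 : (k : ℂ) = (n : ℂ) * (q : ℂ) := mul_left_cancel₀ h2 hk
    have : k = n * q := by exact_mod_cast hk2
    exact ⟨n, by linarith⟩
  · exact eZ_dvd

lemma eZ_den (k : ℤ) (n m : ℕ) (hn : n ≠ 0) : eZ ((n : ℤ) * k) (n * m) = eZ k m := by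
  rcases eq_or_ne m 0 with rfl | hm
  · simp [eZ]
  · rw [eZ, eZ]
    congr 1
    have hn' : ((n : ℕ) : ℂ) ≠ 0 := by exact_mod_cast hn
    have hm' : ((m : ℕ) : ℂ) ≠ 0 := by exact_mod_cast hm
    push_cast
    field_simp

lemma eZ_pow (k : ℤ) (q : ℕ) (u : ℕ) : eZ (k * u) q = (eZ k q) ^ u := by
  induction u with
  | zero => simp [eZ]
  | succ n ih =>
    have : k * ((n : ℤ) + 1) = k * n + k := by ring
    push_cast
    rw [this, eZ_add, ih, pow_succ]

lemma eZ_geom (k : ℤ) (n : ℕ) (hn : n ≠ 0) :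
    ∑ u ∈ Finset.range n, eZ (k * u) n = if (n : ℤ) ∣ k then (n : ℂ) else 0 := by
  have hrw : ∀ u ∈ Finset.range n, eZ (k * u) n = (eZ k n) ^ u := fun u _ => eZ_pow k n u
  rw [Finset.sum_congr rfl hrw]
  by_cases h : (n : ℤ) ∣ k
  · rw [if_pos h]
    rw [(eZ_eq_one_iff hn).2 h]
    simp
  · rw [if_neg h]
    have hne : eZ k n ≠ 1 := fun hc => h ((eZ_eq_one_iff hn).1 hc)
    rw [geom_sum_eq hne]
    have : (eZ k n) ^ n = 1 := by
      rw [← eZ_pow]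
      exact eZ_dvd ⟨k, by ring⟩
    rw [this]
    simp

lemma expE_eq (c d : ℤ) (q : ℕ) :
    expE c d q = ∑ z ∈ (Finset.range q).filter fun z => Nat.gcd z q = 1,
      eZ (c * (z : ℤ) ^ 3 - d * (z : ℤ) ^ 2) q := by
  apply Finset.sum_congr rfl
  intro z _
  rw [eZ]
  congr 2
  push_cast
  ring

lemma sum_lift (p : ℕ) (hp : p.Prime) (k : ℕ) (hk : 1 ≤ k) (g : ℕ → ℂ) :
    ∑ z ∈ (Finset.range (p ^ (k+1))).filter (fun z => Nat.gcd z (p ^ (k+1)) = 1),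
      g (z % p ^ k)
    = p * ∑ w ∈ (Finset.range (p ^ k)).filter (fun w => Nat.gcd w (p ^ k) = 1), g w := by
  have hpk : 0 < p ^ k := pow_pos hp.pos k
  have key : ∀ z : ℕ, Nat.gcd z (p ^ (k+1)) = 1 ↔ Nat.gcd (z % p ^ k) (p ^ k) = 1 := by
    intro z
    have h1 : Nat.Coprime z (p ^ (k+1)) ↔ ¬ p ∣ z := by
      rw [Nat.coprime_pow_right_iff (Nat.succ_pos k), Nat.coprime_comm, hp.coprime_iff_not_dvd]
    have h2 : Nat.Coprime (z % p ^ k) (p ^ k) ↔ ¬ p ∣ z % p ^ k := by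
      rw [Nat.coprime_pow_right_iff hk, Nat.coprime_comm, hp.coprime_iff_not_dvd]
    have h3 : p ∣ z % p ^ k ↔ p ∣ z := by
      rw [Nat.dvd_mod_iff (dvd_pow_self p (Nat.one_le_iff_ne_zero.1 hk))]
    rw [show (Nat.gcd z (p ^ (k+1)) = 1) = Nat.Coprime z (p ^ (k+1)) from rfl,
      show (Nat.gcd (z % p^k) (p ^ k) = 1) = Nat.Coprime (z % p^k) (p ^ k) from rfl,
      h1, h2, h3]
  rw [show (p : ℂ) * ∑ w ∈ (Finset.range (p ^ k)).filter (fun w => Nat.gcd w (p ^ k) = 1), g w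
      = ∑ x ∈ (Finset.range p) ×ˢ ((Finset.range (p ^ k)).filter (fun w => Nat.gcd w (p ^ k) = 1)),
          g x.2 by
    rw [Finset.sum_product]
    simp [Finset.sum_const, mul_comm]]
  apply Finset.sum_nbij' (fun z => (z / p ^ k, z % p ^ k)) (fun x => x.1 * p ^ k + x.2)
  · intro z hz
    simp only [Finset.mem_filter, Finset.mem_range] at hz
    simp only [Finset.mem_product, Finset.mem_filter, Finset.mem_range]
    refine ⟨?_, Nat.mod_lt _ hpk, (key z).1 hz.2⟩
    · have := hz.1
      rw [pow_succ] at this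
      exact Nat.div_lt_of_lt_mul (by linarith [this])
  · intro x hx
    simp only [Finset.mem_product, Finset.mem_filter, Finset.mem_range] at hx
    simp only [Finset.mem_filter, Finset.mem_range]
    constructor
    · rw [pow_succ]
      calc x.1 * p ^ k + x.2 < x.1 * p ^ k + p ^ k := by linarith [hx.2.1]
        _ = (x.1 + 1) * p ^ k := by ring
        _ ≤ p * p ^ k := Nat.mul_le_mul_right _ hx.1
        _ = p ^ k * p := by ring
    · rw [key, add_comm, Nat.add_mul_mod_self_right, Nat.mod_eq_of_lt hx.2.1]
      exact hx.2.2
  · intro z hz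
    show z / p ^ k * p ^ k + z % p ^ k = z
    rw [Nat.mul_comm]
    exact Nat.div_add_mod z (p ^ k)
  · intro x hx
    simp only [Finset.mem_product, Finset.mem_filter, Finset.mem_range] at hx
    have hmod : (x.1 * p ^ k + x.2) % p ^ k = x.2 := by
      rw [add_comm, Nat.add_mul_mod_self_right, Nat.mod_eq_of_lt hx.2.1]
    have hdiv : (x.1 * p ^ k + x.2) / p ^ k = x.1 := by
      rw [mul_comm, Nat.mul_add_div hpk, Nat.div_eq_of_lt hx.2.1, Nat.add_zero]
    simp [hmod, hdiv]
  · intro z hz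
    rfl

lemma scale_one (p : ℕ) (hp : p.Prime) (A B : ℤ) (k : ℕ) (hk : 1 ≤ k) :
    expE ((p : ℤ) * A) ((p : ℤ) * B) (p ^ (k + 1)) = (p : ℂ) * expE A B (p ^ k) := by
  rw [expE_eq, expE_eq]
  have step : ∀ z : ℕ, eZ ((p : ℤ) * A * (z:ℤ) ^ 3 - (p : ℤ) * B * (z:ℤ) ^ 2) (p ^ (k+1))
      = (fun w : ℕ => eZ (A * (w : ℤ) ^ 3 - B * (w : ℤ) ^ 2) (p ^ k)) (z % p ^ k) := by
    intro z
    simp only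
    have h1 : (p : ℤ) * A * (z:ℤ) ^ 3 - (p : ℤ) * B * (z:ℤ) ^ 2
        = (p : ℤ) * (A * (z:ℤ) ^ 3 - B * (z:ℤ) ^ 2) := by ring
    have h2 : p ^ (k+1) = p * p ^ k := by ring
    rw [h1, h2, eZ_den _ _ _ hp.ne_zero]
    apply eZ_congr
    set M : ℤ := ((z % p ^ k : ℕ) : ℤ) with hM
    have hzm : ((p:ℤ) ^ k) ∣ ((z : ℤ) - M) := by
      refine ⟨(z / p ^ k : ℕ), ?_⟩
      have hnat : z = p ^ k * (z / p ^ k) + z % p ^ k := (Nat.div_add_mod z (p ^ k)).symm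
      have hcast : (z : ℤ) = (p:ℤ) ^ k * ((z / p ^ k : ℕ) : ℤ) + M := by
        rw [hM]; exact_mod_cast congrArg (fun n : ℕ => (n : ℤ)) hnat
      linarith
    have hm : (z : ℤ) ≡ M [ZMOD ((p:ℤ) ^ k)] :=
      Int.modEq_iff_dvd.2 (by rw [← neg_sub]; exact dvd_neg.mpr hzm)
    have hmod : (A * (z:ℤ) ^ 3 - B * (z:ℤ) ^ 2) ≡ (A * M ^ 3 - B * M ^ 2)
        [ZMOD ((p:ℤ) ^ k)] := ((hm.pow 3).mul_left A).sub ((hm.pow 2).mul_left B)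
    exact_mod_cast hmod.symm.dvd
  rw [Finset.sum_congr rfl (fun z _ => step z)]
  exact sum_lift p hp k hk (fun w : ℕ => eZ (A * (w : ℤ) ^ 3 - B * (w : ℤ) ^ 2) (p ^ k))

lemma scale_mul (p : ℕ) (hp : p.Prime) (c' d' : ℤ) :
    ∀ s t : ℕ, s + 1 ≤ t →
      expE ((p:ℤ)^s * c') ((p:ℤ)^s * d') (p^t)
        = (p:ℂ)^s * expE c' d' (p^(t-s)) := by
  intro s
  induction s with
  | zero => intro t ht; simp
  | succ s ih =>
    intro t ht
    obtain ⟨u, rfl⟩ : ∃ u, t = u + 1 := ⟨t - 1, by omega⟩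
    have hu : 1 ≤ u := by omega
    have h1 : (p:ℤ)^(s+1) * c' = (p:ℤ) * ((p:ℤ)^s * c') := by ring
    have h2 : (p:ℤ)^(s+1) * d' = (p:ℤ) * ((p:ℤ)^s * d') := by ring
    rw [h1, h2, scale_one p hp _ _ u hu, ih u (by omega)]
    rw [show u + 1 - (s + 1) = u - s from by omega]
    ring

lemma scale_div (p : ℕ) (hp : p.Prime) (c d : ℤ) (s t : ℕ) (hs : s + 1 ≤ t)
    (hc : (p:ℤ)^s ∣ c) (hd : (p:ℤ)^s ∣ d) :
    expE c d (p^t) = (p:ℂ)^s * expE (c / (p:ℤ)^s) (d / (p:ℤ)^s) (p^(t-s)) := by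
  obtain ⟨c', rfl⟩ := hc
  obtain ⟨d', rfl⟩ := hd
  have hps : ((p:ℤ)^s) ≠ 0 := pow_ne_zero _ (by exact_mod_cast hp.ne_zero)
  rw [Int.mul_ediv_cancel_left _ hps, Int.mul_ediv_cancel_left _ hps]
  exact scale_mul p hp c' d' s t hs

noncomputable def phaseU (a b : ℤ) (q : ℕ) (u : (ZMod q)ˣ) : ℂ :=
  eZ (a * (((u : ZMod q).val : ℤ))^3 - b * (((u : ZMod q).val : ℤ))^2) q

lemma phaseU_rep (a b : ℤ) (q : ℕ) [NeZero q] (u : (ZMod q)ˣ) (M : ℤ)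
    (h : (M : ZMod q) = (u : ZMod q)) :
    phaseU a b q u = eZ (a * M^3 - b * M^2) q := by
  apply eZ_congr
  set V : ℤ := (((u : ZMod q).val : ℤ)) with hV
  have hVM : M ≡ V [ZMOD (q : ℤ)] := by
    rw [Int.ModEq]
    have : (M : ZMod q) = ((V : ℤ) : ZMod q) := by
      rw [h, hV]
      push_cast
      rw [ZMod.natCast_val, ZMod.cast_id]
    exact (ZMod.intCast_eq_intCast_iff' M V q).1 (by exact_mod_cast this)
  have hmod : (a * M ^ 3 - b * M ^ 2) ≡ (a * V ^ 3 - b * V ^ 2) [ZMOD (q:ℤ)] :=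
    ((hVM.pow 3).mul_left a).sub ((hVM.pow 2).mul_left b)
  exact hmod.dvd

lemma expE_units (a b : ℤ) (q : ℕ) [NeZero q] :
    expE a b q = ∑ u : (ZMod q)ˣ, phaseU a b q u := by
  rw [expE_eq]
  symm
  apply Finset.sum_nbij' (i := fun u : (ZMod q)ˣ => (u : ZMod q).val)
    (j := fun z : ℕ => if h : Nat.Coprime z q then ZMod.unitOfCoprime z h else 1)
  · intro u _
    simp only [Finset.mem_filter, Finset.mem_range]
    exact ⟨ZMod.val_lt _, ZMod.val_coe_unit_coprime u⟩
  · intro z hz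
    exact Finset.mem_univ _
  · intro u _
    rw [dif_pos (ZMod.val_coe_unit_coprime u)]
    apply Units.ext
    simp only [ZMod.unitOfCoprime]
    rw [ZMod.natCast_val, ZMod.cast_id]
  · intro z hz
    simp only [Finset.mem_filter, Finset.mem_range] at hz
    rw [dif_pos hz.2]
    simp only [ZMod.unitOfCoprime]
    exact ZMod.val_natCast_of_lt hz.1
  · intro u _
    rfl

lemma vanish (p : ℕ) (hp : p.Prime) (a b : ℤ) (t j : ℕ) (hj : 1 ≤ j) (htj : 2*j ≤ t)
    (hyp : ∀ V : ℕ, Nat.Coprime V p → ¬ ((p:ℤ)^j ∣ 3*a*(V:ℤ)^3 - 2*b*(V:ℤ)^2)) :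
    expE a b (p^t) = 0 := by
  have ht1 : 1 ≤ t := by omega
  have hq0 : p ^ t ≠ 0 := pow_ne_zero _ hp.ne_zero
  haveI : NeZero (p ^ t) := ⟨hq0⟩
  have hpj0 : p ^ j ≠ 0 := pow_ne_zero _ hp.ne_zero
  set ε : ℕ := p ^ (t - j) with hεdef
  have hεp : p ∣ ε := dvd_pow_self p (by omega)
  have hcop : ∀ n : ℕ, Nat.Coprime (1 + ε * n) (p ^ t) := by
    intro n
    apply Nat.Coprime.pow_right _
    rw [Nat.coprime_comm, hp.coprime_iff_not_dvd]
    intro hdvd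
    rw [Nat.add_comm] at hdvd
    exact hp.ne_one (Nat.dvd_one.1 ((Nat.dvd_add_right (hεp.mul_right n)).1 hdvd))
  set w : ℕ → (ZMod (p ^ t))ˣ := fun n => ZMod.unitOfCoprime (1 + ε * n) (hcop n) with hwdef
  set K : (ZMod (p ^ t))ˣ → ℤ :=
    fun u => 3 * a * (((u : ZMod (p ^ t)).val : ℤ))^3 - 2 * b * (((u : ZMod (p ^ t)).val : ℤ))^2
    with hKdef
  have key : ∀ (n : ℕ) (u : (ZMod (p^t))ˣ),
      phaseU a b (p^t) (w n * u) = phaseU a b (p^t) u * eZ (K u * n) (p^j) := by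
    intro n u
    set V : ℤ := (((u : ZMod (p^t)).val : ℤ)) with hVdef
    have hrep : phaseU a b (p^t) (w n * u)
        = eZ (a * (((1 + ε * n : ℕ) : ℤ) * V)^3 - b * (((1 + ε * n : ℕ) : ℤ) * V)^2) (p^t) := by
      apply phaseU_rep
      have h1 : ((w n : ZMod (p^t))) = ((1 + ε * n : ℕ) : ZMod (p^t)) := rfl
      rw [Units.val_mul, h1, hVdef]
      push_cast [ZMod.natCast_val, ZMod.cast_id]
      rfl
    rw [hrep]
    have expand : a * (((1 + ε * n : ℕ) : ℤ) * V)^3 - b * (((1 + ε * n : ℕ) : ℤ) * V)^2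
        = (a * V^3 - b * V^2) + (ε : ℤ) * (n * (3*a*V^3 - 2*b*V^2))
          + (ε : ℤ)^2 * (3*a*V^3*n^2 + a*V^3*(ε : ℤ)*n^3 - b*V^2*n^2) := by
      push_cast
      ring
    rw [expand, eZ_add, eZ_add]
    have h1 : eZ ((ε : ℤ)^2 * (3*a*V^3*n^2 + a*V^3*(ε : ℤ)*n^3 - b*V^2*n^2)) (p^t) = 1 := by
      apply eZ_dvd
      have : ((p : ℤ)^t) ∣ (ε : ℤ)^2 := by
        have : (ε : ℤ)^2 = (p : ℤ)^(2*(t-j)) := by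
          rw [hεdef]; push_cast; rw [← pow_mul]; ring_nf
        rw [this]
        exact pow_dvd_pow _ (by omega)
      exact_mod_cast (this.mul_right _)
    have h2 : eZ ((ε : ℤ) * (n * (3*a*V^3 - 2*b*V^2))) (p^t) = eZ (K u * n) (p^j) := by
      have hq : p ^ t = ε * p ^ j := by
        rw [hεdef, ← pow_add]
        congr 1
        omega
      rw [hq, eZ_den _ _ _ (pow_ne_zero _ hp.ne_zero)]
      congr 1
      have hKu : K u = 3*a*V^3 - 2*b*V^2 := rfl
      rw [hKu]
      ring
    rw [h1, h2, mul_one]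
    rfl
  -- sum over n of the translated sums
  have perm : ∀ n : ℕ, ∑ u : (ZMod (p^t))ˣ, phaseU a b (p^t) (w n * u)
      = expE a b (p^t) := by
    intro n
    rw [expE_units]
    exact Equiv.sum_comp (Equiv.mulLeft (w n)) (phaseU a b (p^t))
  have main : (p^j : ℂ) * expE a b (p^t) = 0 := by
    have lhs : (p^j : ℂ) * expE a b (p^t)
        = ∑ n ∈ Finset.range (p^j), ∑ u : (ZMod (p^t))ˣ, phaseU a b (p^t) (w n * u) := by
      rw [Finset.sum_congr rfl (fun n _ => perm n)]
      rw [Finset.sum_const, Finset.card_range]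
      push_cast
      ring
    rw [lhs]
    rw [Finset.sum_comm]
    apply Finset.sum_eq_zero
    intro u _
    rw [Finset.sum_congr rfl (fun n _ => key n u)]
    rw [← Finset.mul_sum]
    have : ∑ n ∈ Finset.range (p^j), eZ (K u * n) (p^j) = 0 := by
      have hVp : Nat.Coprime ((u : ZMod (p^t)).val) p := by
        apply Nat.Coprime.coprime_dvd_right (dvd_pow_self p (Nat.one_le_iff_ne_zero.1 ht1))
        exact ZMod.val_coe_unit_coprime u
      have hnd : ¬ (((p^j : ℕ) : ℤ) ∣ K u) := by
        have hKu : K u = 3*a*(((u : ZMod (p^t)).val : ℤ))^3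
            - 2*b*(((u : ZMod (p^t)).val : ℤ))^2 := rfl
        rw [hKu]
        push_cast
        exact hyp _ hVp
      rw [eZ_geom _ _ hpj0, if_neg hnd]
    rw [this, mul_zero]
  have hpjC : (p^j : ℂ) ≠ 0 := by
    exact_mod_cast hpj0
  exact (mul_eq_zero.1 main).resolve_left hpjC

lemma intCast_zmod_ne_zero_of_not_dvd {m : ℤ} {n : ℕ} [NeZero n] (h : ¬ (n:ℤ) ∣ m) :
    ((m : ZMod n)) ≠ 0 := fun hc => h ((ZMod.intCast_zmod_eq_zero_iff_dvd m n).1 hc)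

lemma natCast_zmod_ne_zero_of_not_dvd {m n : ℕ} [NeZero n] (h : ¬ n ∣ m) :
    ((m : ZMod n)) ≠ 0 := fun hc => h ((ZMod.natCast_eq_zero_iff m n).1 hc)

lemma step_big (p : ℕ) (hp : p.Prime) (hp2 : p ≠ 2) (hp3 : p ≠ 3) (f₂ f₃ : ℕ) (c d : ℤ)
    (t : ℕ) (ht : 2 ≤ t)
    (hne : expE (2^f₂*c) (3^f₃*d) (p^t) ≠ 0) : ((p:ℤ) ∣ c ↔ (p:ℤ) ∣ d) := by
  haveI : Fact p.Prime := ⟨hp⟩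
  have hp2' : ¬ (p:ℤ) ∣ 2 := by
    intro h
    have : (p:ℤ) ∣ (2:ℕ) := by exact_mod_cast h
    exact hp2 ((Nat.prime_dvd_prime_iff_eq hp Nat.prime_two).1 (by exact_mod_cast this))
  have hp3' : ¬ (p:ℤ) ∣ 3 := by
    intro h
    have : (p:ℤ) ∣ (3:ℕ) := by exact_mod_cast h
    exact hp3 ((Nat.prime_dvd_prime_iff_eq hp Nat.prime_three).1 (by exact_mod_cast this))
  have h2 : ((2:ℤ) : ZMod p) ≠ 0 := intCast_zmod_ne_zero_of_not_dvd hp2'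
  have h3 : ((3:ℤ) : ZMod p) ≠ 0 := intCast_zmod_ne_zero_of_not_dvd hp3'
  have key : ∀ c' d' : ℤ, (p:ℤ) ∣ c' → ¬ (p:ℤ) ∣ d' →
      expE (2^f₂*c') (3^f₃*d') (p^t) = 0 ∧ expE (2^f₂*d') (3^f₃*c') (p^t) = 0 := by
    intro c' d' hc hd
    have hC : ((c' : ZMod p)) = 0 := (ZMod.intCast_zmod_eq_zero_iff_dvd c' p).2 hc
    have hD : ((d' : ZMod p)) ≠ 0 := intCast_zmod_ne_zero_of_not_dvd hd
    constructor
    · apply vanish p hp _ _ t 1 le_rfl (by omega)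
      intro V hV hdvd
      have hW : ((V : ZMod p)) ≠ 0 :=
        natCast_zmod_ne_zero_of_not_dvd (by rwa [Nat.coprime_comm, hp.coprime_iff_not_dvd] at hV)
      rw [pow_one] at hdvd
      have := (ZMod.intCast_zmod_eq_zero_iff_dvd _ p).2 hdvd
      push_cast at this
      rw [hC] at this
      simp only [mul_zero, zero_mul, mul_comm] at this
      have hne0 : (2:ZMod p) * (3:ZMod p)^f₃ * (d' : ZMod p) * ((V:ℕ) : ZMod p)^2 ≠ 0 := by
        apply mul_ne_zero (mul_ne_zero (mul_ne_zero (by exact_mod_cast h2) _) hD)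
          (pow_ne_zero _ hW)
        exact pow_ne_zero _ (by exact_mod_cast h3)
      apply hne0
      have : (3:ZMod p) * 2^f₂ * 0 * ((V:ℕ):ZMod p)^3
          - 2 * 3^f₃ * (d':ZMod p) * ((V:ℕ):ZMod p)^2 = 0 := by
        push_cast at this ⊢
        linear_combination this
      calc (2:ZMod p) * (3:ZMod p)^f₃ * (d' : ZMod p) * ((V:ℕ) : ZMod p)^2
          = -((3:ZMod p) * 2^f₂ * 0 * ((V:ℕ):ZMod p)^3
            - 2 * 3^f₃ * (d':ZMod p) * ((V:ℕ):ZMod p)^2) := by ring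
        _ = 0 := by rw [this]; ring
    · apply vanish p hp _ _ t 1 le_rfl (by omega)
      intro V hV hdvd
      have hW : ((V : ZMod p)) ≠ 0 :=
        natCast_zmod_ne_zero_of_not_dvd (by rwa [Nat.coprime_comm, hp.coprime_iff_not_dvd] at hV)
      rw [pow_one] at hdvd
      have := (ZMod.intCast_zmod_eq_zero_iff_dvd _ p).2 hdvd
      push_cast at this
      rw [hC] at this
      have hne0 : (3:ZMod p) * (2:ZMod p)^f₂ * (d' : ZMod p) * ((V:ℕ) : ZMod p)^3 ≠ 0 := by
        apply mul_ne_zero (mul_ne_zero (mul_ne_zero (by exact_mod_cast h3)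
          (pow_ne_zero _ (by exact_mod_cast h2))) hD) (pow_ne_zero _ hW)
      apply hne0
      linear_combination this
  constructor
  · intro hc
    by_contra hd
    exact hne (key c d hc hd).1
  · intro hd
    by_contra hc
    exact hne (key d c hd hc).2

lemma zmod2_cases (x : ZMod 2) : x = 0 ∨ x = 1 := by revert x; decide

lemma step_two (f₃ : ℕ) (c d : ℤ) (t : ℕ) (ht : 6 ≤ t)
    (hne : expE (2^1*c) (3^f₃*d) (2^t) ≠ 0) : ((2:ℤ) ∣ c ↔ (2:ℤ) ∣ d) := by
  have key : ∀ c' d' : ℤ, ((c' : ZMod 2)) + ((d' : ZMod 2)) = 1 →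
      expE (2^1*c') (3^f₃*d') (2^t) = 0 := by
    intro c' d' hcd
    apply vanish 2 Nat.prime_two _ _ t 3 (by omega) (by omega)
    intro V hV hdvd
    have hVodd : ¬ 2 ∣ V := by rwa [Nat.coprime_comm, Nat.prime_two.coprime_iff_not_dvd] at hV
    have hX : 3*(2^1*c')*(V:ℤ)^3 - 2*(3^f₃*d')*(V:ℤ)^2
        = 2 * (3*c'*(V:ℤ)^3 - 3^f₃*d'*(V:ℤ)^2) := by ring
    rw [hX] at hdvd
    push_cast at hdvd
    rw [show ((8:ℤ)) = 2 * 4 from by norm_num] at hdvd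
    have h4 : (4:ℤ) ∣ (3*c'*(V:ℤ)^3 - 3^f₃*d'*(V:ℤ)^2) :=
      (mul_dvd_mul_iff_left (by norm_num : (2:ℤ) ≠ 0)).1 hdvd
    have h2 : (2:ℤ) ∣ (3*c'*(V:ℤ)^3 - 3^f₃*d'*(V:ℤ)^2) := dvd_trans (by norm_num) h4
    have hz : (((3*c'*(V:ℤ)^3 - 3^f₃*d'*(V:ℤ)^2) : ℤ) : ZMod 2) = 0 :=
      (ZMod.intCast_zmod_eq_zero_iff_dvd _ 2).2 h2
    push_cast at hz
    have hV2 : ((V : ℕ) : ZMod 2) = 1 := by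
      rcases zmod2_cases ((V:ℕ) : ZMod 2) with h | h
      · exact absurd ((ZMod.natCast_eq_zero_iff V 2).1 h) hVodd
      · exact h
    rw [hV2] at hz
    have h32 : (3 : ZMod 2) = 1 := by decide
    rw [h32] at hz
    simp only [one_pow, one_mul, mul_one] at hz
    rw [show ((c' : ZMod 2) - (d' : ZMod 2) = 0) ↔ ((c' : ZMod 2) = (d' : ZMod 2)) from
      sub_eq_zero, ] at hz
    rcases zmod2_cases (c' : ZMod 2) with h | h <;> rw [h] at hcd hz <;> rw [← hz] at hcd <;>
      simp at hcd
  constructor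
  · intro hc
    by_contra hd
    apply hne
    apply key
    have hc0 : ((c : ZMod 2)) = 0 := (ZMod.intCast_zmod_eq_zero_iff_dvd c 2).2 hc
    have hd1 : ((d : ZMod 2)) = 1 :=
      (zmod2_cases _).resolve_left (intCast_zmod_ne_zero_of_not_dvd hd)
    rw [hc0, hd1, zero_add]
  · intro hd
    by_contra hc
    apply hne
    apply key
    have hd0 : ((d : ZMod 2)) = 0 := (ZMod.intCast_zmod_eq_zero_iff_dvd d 2).2 hd
    have hc1 : ((c : ZMod 2)) = 1 :=
      (zmod2_cases _).resolve_left (intCast_zmod_ne_zero_of_not_dvd hc)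
    rw [hc1, hd0, add_zero]

lemma step_three (f₂ : ℕ) (c d : ℤ) (t : ℕ) (ht : 4 ≤ t)
    (hne : expE (2^f₂*c) (3^1*d) (3^t) ≠ 0) : ((3:ℤ) ∣ c ↔ (3:ℤ) ∣ d) := by
  haveI : Fact (Nat.Prime 3) := ⟨Nat.prime_three⟩
  have key : ∀ c' d' : ℤ, (((c' : ZMod 3) = 0 ∧ (d' : ZMod 3) ≠ 0) ∨
      ((c' : ZMod 3) ≠ 0 ∧ (d' : ZMod 3) = 0)) →
      expE (2^f₂*c') (3^1*d') (3^t) = 0 := by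
    intro c' d' hcd
    apply vanish 3 Nat.prime_three _ _ t 2 (by omega) (by omega)
    intro V hV hdvd
    have hW : ((V : ℕ) : ZMod 3) ≠ 0 := by
      apply natCast_zmod_ne_zero_of_not_dvd
      rwa [Nat.coprime_comm, Nat.prime_three.coprime_iff_not_dvd] at hV
    have hX : 3*(2^f₂*c')*(V:ℤ)^3 - 2*(3^1*d')*(V:ℤ)^2
        = 3 * (2^f₂*c'*(V:ℤ)^3 - 2*d'*(V:ℤ)^2) := by ring
    rw [hX] at hdvd
    push_cast at hdvd
    rw [show ((9:ℤ)) = 3 * 3 from by norm_num] at hdvd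
    have h3d : (3:ℤ) ∣ (2^f₂*c'*(V:ℤ)^3 - 2*d'*(V:ℤ)^2) :=
      (mul_dvd_mul_iff_left (by norm_num : (3:ℤ) ≠ 0)).1 hdvd
    have hz : (((2^f₂*c'*(V:ℤ)^3 - 2*d'*(V:ℤ)^2) : ℤ) : ZMod 3) = 0 :=
      (ZMod.intCast_zmod_eq_zero_iff_dvd _ 3).2 h3d
    push_cast at hz
    have h2 : (2 : ZMod 3) ≠ 0 := by
      have : ((2:ℕ) : ZMod 3) ≠ 0 := natCast_zmod_ne_zero_of_not_dvd (by norm_num)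
      exact_mod_cast this
    rcases hcd with ⟨hC, hD⟩ | ⟨hC, hD⟩
    · rw [hC] at hz
      have hne0 : (2:ZMod 3) * (d' : ZMod 3) * ((V:ℕ) : ZMod 3)^2 ≠ 0 :=
        mul_ne_zero (mul_ne_zero h2 hD) (pow_ne_zero _ hW)
      apply hne0
      linear_combination -hz
    · rw [hD] at hz
      have hne0 : (2:ZMod 3)^f₂ * (c' : ZMod 3) * ((V:ℕ) : ZMod 3)^3 ≠ 0 :=
        mul_ne_zero (mul_ne_zero (pow_ne_zero _ h2) hC) (pow_ne_zero _ hW)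
      apply hne0
      linear_combination hz
  constructor
  · intro hc
    by_contra hd
    exact hne (key c d (Or.inl ⟨(ZMod.intCast_zmod_eq_zero_iff_dvd c 3).2 hc,
      intCast_zmod_ne_zero_of_not_dvd hd⟩))
  · intro hd
    by_contra hc
    exact hne (key c d (Or.inr ⟨intCast_zmod_ne_zero_of_not_dvd hc,
      (ZMod.intCast_zmod_eq_zero_iff_dvd d 3).2 hd⟩))

lemma gcd_eq_pow (p : ℕ) (hp : p.Prime) (c : ℤ) (s t : ℕ) (hs : s < t)
    (h1 : (p:ℤ)^s ∣ c) (h2 : ¬ (p:ℤ)^(s+1) ∣ c) :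
    Int.gcd c ((p:ℤ)^t) = p^s := by
  have hcast : ((p:ℤ))^t = ((p^t : ℕ) : ℤ) := by push_cast; ring
  rw [hcast]
  have hgt : (Int.gcd c ((p^t : ℕ) : ℤ)) ∣ p^t := by
    have h := Int.gcd_dvd_right (a := c) (b := ((p^t : ℕ) : ℤ))
    exact_mod_cast h
  obtain ⟨k, hk, hgk⟩ := (Nat.dvd_prime_pow hp).1 hgt
  have hsk : p^s ∣ Int.gcd c ((p^t : ℕ) : ℤ) := by
    have hd : ((p:ℤ)^s) ∣ Int.gcd c ((p^t : ℕ) : ℤ) :=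
      Int.dvd_coe_gcd h1 (by rw [← hcast]; exact pow_dvd_pow _ (le_of_lt hs))
    have : (((p^s : ℕ)) : ℤ) ∣ ((Int.gcd c ((p^t : ℕ) : ℤ) : ℕ) : ℤ) := by
      push_cast
      exact_mod_cast hd
    exact_mod_cast this
  rw [hgk] at hsk ⊢
  have hsk' : s ≤ k := (Nat.pow_dvd_pow_iff_le_right hp.one_lt).1 hsk
  have hks : k ≤ s := by
    by_contra hlt
    push_neg at hlt
    apply h2
    have hd : ((p:ℤ)^(s+1)) ∣ (p:ℤ)^k := pow_dvd_pow _ (by omega)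
    have hgc : ((p^k : ℕ) : ℤ) ∣ c := hgk ▸ Int.gcd_dvd_left c ((p^t : ℕ) : ℤ)
    exact hd.trans (by push_cast at hgc ⊢; exact_mod_cast hgc)
  have : k = s := le_antisymm hks hsk'
  rw [this]

lemma scale_ff (p : ℕ) (hp : p.Prime) (f₂ f₃ : ℕ) (c d : ℤ) (k t : ℕ) (hk : k + 1 ≤ t)
    (hc : (p:ℤ)^k ∣ c) (hd : (p:ℤ)^k ∣ d) :
    expE (2^f₂*c) (3^f₃*d) (p^t)
      = (p:ℂ)^k * expE (2^f₂*(c/(p:ℤ)^k)) (3^f₃*(d/(p:ℤ)^k)) (p^(t-k)) := by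
  obtain ⟨c', rfl⟩ := hc
  obtain ⟨d', rfl⟩ := hd
  have hps : ((p:ℤ)^k) ≠ 0 := pow_ne_zero _ (by exact_mod_cast hp.ne_zero)
  rw [Int.mul_ediv_cancel_left _ hps, Int.mul_ediv_cancel_left _ hps]
  rw [show (2:ℤ)^f₂*((p:ℤ)^k*c') = (p:ℤ)^k * (2^f₂*c') from by ring,
    show (3:ℤ)^f₃*((p:ℤ)^k*d') = (p:ℤ)^k * (3^f₃*d') from by ring]
  exact scale_mul p hp _ _ k t hk

lemma descent (p : ℕ) (hp : p.Prime) (f₂ f₃ : ℕ) (L : ℕ) (hL : 1 ≤ L)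
    (Hstep : ∀ (c d : ℤ) (t' : ℕ), L ≤ t' → expE (2^f₂*c) (3^f₃*d) (p^t') ≠ 0 →
      ((p:ℤ) ∣ c ↔ (p:ℤ) ∣ d))
    (c d : ℤ) (t : ℕ) (hne : expE (2^f₂*c) (3^f₃*d) (p^t) ≠ 0) :
    ∀ k, k + L ≤ t + 1 →
      ((p:ℤ)^k ∣ c ∧ (p:ℤ)^k ∣ d) ∨
      (∃ s, s < k ∧ (p:ℤ)^s ∣ c ∧ (p:ℤ)^s ∣ d ∧ ¬(p:ℤ)^(s+1) ∣ c ∧ ¬(p:ℤ)^(s+1) ∣ d) := by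
  intro k
  induction k with
  | zero => intro _; left; simp
  | succ k ih =>
    intro hk
    rcases ih (by omega) with ⟨hc, hd⟩ | ⟨s, hs, h⟩
    · -- scale down by p^k and apply step at level t - k
      have hk1 : k + 1 ≤ t := by omega
      have hsc := scale_ff p hp f₂ f₃ c d k t hk1 hc hd
      have hne' : expE (2^f₂*(c/(p:ℤ)^k)) (3^f₃*(d/(p:ℤ)^k)) (p^(t-k)) ≠ 0 := by
        intro h0
        rw [hsc, h0, mul_zero] at hne
        exact hne rfl
      have hiff := Hstep (c/(p:ℤ)^k) (d/(p:ℤ)^k) (t-k) (by omega) hne'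
      obtain ⟨c', rfl⟩ := hc
      obtain ⟨d', rfl⟩ := hd
      have hps : ((p:ℤ)^k) ≠ 0 := pow_ne_zero _ (by exact_mod_cast hp.ne_zero)
      rw [Int.mul_ediv_cancel_left _ hps, Int.mul_ediv_cancel_left _ hps] at hiff
      by_cases hpc : (p:ℤ) ∣ c'
      · left
        have hpd : (p:ℤ) ∣ d' := hiff.1 hpc
        constructor
        · rw [pow_succ]
          exact mul_dvd_mul_left _ hpc
        · rw [pow_succ]
          exact mul_dvd_mul_left _ hpd
      · right
        refine ⟨k, by omega, ⟨c', rfl⟩, ⟨d', rfl⟩, ?_, ?_⟩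
        · intro hdvd
          apply hpc
          rw [pow_succ] at hdvd
          exact (mul_dvd_mul_iff_left (pow_ne_zero k (by exact_mod_cast hp.ne_zero :
            (p:ℤ) ≠ 0))).1 hdvd
        · intro hdvd
          apply fun h => hpc (hiff.2 h)
          rw [pow_succ] at hdvd
          exact (mul_dvd_mul_iff_left (pow_ne_zero k (by exact_mod_cast hp.ne_zero :
            (p:ℤ) ≠ 0))).1 hdvd
    · exact Or.inr ⟨s, by omega, h⟩

lemma master (p : ℕ) (hp : p.Prime) (f₂ f₃ : ℕ) (t r L k₀ : ℕ)
    (hr2 : 2 ≤ r) (ht : r ≤ t) (hL1 : 1 ≤ L)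
    (hk₀ : k₀ + L ≤ t + 1) (hk₀m : t - r + 1 ≤ k₀) (hk₀M : k₀ ≤ t - r + 2)
    (Hstep : ∀ (c d : ℤ) (t' : ℕ), L ≤ t' → expE (2^f₂*c) (3^f₃*d) (p^t') ≠ 0 →
      ((p:ℤ) ∣ c ↔ (p:ℤ) ∣ d))
    (c d : ℤ) :
    (¬ (p : ℤ) ^ (t - r + 2) ∣ c → ¬ (p : ℤ) ^ (t - r + 2) ∣ d →
      expE (2^f₂*c) (3^f₃*d) (p ^ t) ≠ 0 →
      ∃ s : ℕ, Int.gcd c ((p : ℤ) ^ t) = p ^ s ∧ Int.gcd d ((p : ℤ) ^ t) = p ^ s ∧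
        expE (2^f₂*c) (3^f₃*d) (p ^ t) =
          (p : ℂ) ^ s * expE (2^f₂*(c / (p : ℤ) ^ s)) (3^f₃*(d / (p : ℤ) ^ s)) (p ^ (t - s))) ∧
    (((p : ℤ) ^ (t - r + 2) ∣ c ∨ (p : ℤ) ^ (t - r + 2) ∣ d) →
      expE (2^f₂*c) (3^f₃*d) (p ^ t) ≠ 0 →
      (p : ℤ) ^ (t - r + 1) ∣ c ∧ (p : ℤ) ^ (t - r + 1) ∣ d ∧
        expE (2^f₂*c) (3^f₃*d) (p ^ t) =
          (p : ℂ) ^ (t - r + 1) *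
            expE (2^f₂*(c / (p : ℤ) ^ (t - r + 1))) (3^f₃*(d / (p : ℤ) ^ (t - r + 1)))
              (p ^ (r - 1))) := by
  set m := t - r + 1 with hm
  have hm1 : t - r + 2 = m + 1 := by omega
  have hmt : m + 1 ≤ t := by omega
  have htm : t - m = r - 1 := by omega
  constructor
  · intro hc hd hne
    rw [hm1] at hc hd
    have D := descent p hp f₂ f₃ L hL1 Hstep c d t hne k₀ hk₀
    have key : ∃ s, s ≤ m ∧ (p:ℤ)^s ∣ c ∧ (p:ℤ)^s ∣ d ∧
        ¬(p:ℤ)^(s+1) ∣ c ∧ ¬(p:ℤ)^(s+1) ∣ d := by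
      rcases D with ⟨h1, h2⟩ | ⟨s, hsk, hsc, hsd, hxc, hxd⟩
      · exact ⟨m, le_rfl, (pow_dvd_pow _ (by omega)).trans h1,
          (pow_dvd_pow _ (by omega)).trans h2, hc, hd⟩
      · refine ⟨s, by omega, hsc, hsd, hxc, hxd⟩
    obtain ⟨s, hsm, hsc, hsd, hxc, hxd⟩ := key
    have hst : s < t := by omega
    refine ⟨s, gcd_eq_pow p hp c s t hst hsc hxc, gcd_eq_pow p hp d s t hst hsd hxd, ?_⟩
    exact scale_ff p hp f₂ f₃ c d s t (by omega) hsc hsd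
  · intro hyp hne
    rw [hm1] at hyp
    have D := descent p hp f₂ f₃ L hL1 Hstep c d t hne k₀ hk₀
    have key : (p:ℤ)^m ∣ c ∧ (p:ℤ)^m ∣ d := by
      rcases D with ⟨h1, h2⟩ | ⟨s, hsk, hsc, hsd, hxc, hxd⟩
      · exact ⟨(pow_dvd_pow _ (by omega)).trans h1, (pow_dvd_pow _ (by omega)).trans h2⟩
      · exfalso
        rcases hyp with h | h
        · exact hxc ((pow_dvd_pow _ (by omega : s + 1 ≤ m + 1)).trans h)
        · exact hxd ((pow_dvd_pow _ (by omega : s + 1 ≤ m + 1)).trans h)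
    refine ⟨key.1, key.2, ?_⟩
    have := scale_ff p hp f₂ f₃ c d m t (by omega) key.1 key.2
    rw [this, htm]

theorem stmt12 (p : ℕ) (hp : p.Prime) (t : ℕ) (ht : rfun p ≤ t)
    (f₂ f₃ : ℕ) (hf₂ : f₂ ≤ 1) (hf₃ : f₃ ≤ 1)
    (hw₂ : w2 (p ^ t) ≤ f₂) (hw₃ : w3 (p ^ t) ≤ f₃) (c d : ℤ) :
    (¬ (p : ℤ) ^ (t - rfun p + 2) ∣ c → ¬ (p : ℤ) ^ (t - rfun p + 2) ∣ d →
      expEff f₂ f₃ c d (p ^ t) ≠ 0 →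
      ∃ s : ℕ, Int.gcd c ((p : ℤ) ^ t) = p ^ s ∧ Int.gcd d ((p : ℤ) ^ t) = p ^ s ∧
        expEff f₂ f₃ c d (p ^ t) =
          (p : ℂ) ^ s * expEff f₂ f₃ (c / (p : ℤ) ^ s) (d / (p : ℤ) ^ s) (p ^ (t - s))) ∧
    (((p : ℤ) ^ (t - rfun p + 2) ∣ c ∨ (p : ℤ) ^ (t - rfun p + 2) ∣ d) →
      expEff f₂ f₃ c d (p ^ t) ≠ 0 →
      (p : ℤ) ^ (t - rfun p + 1) ∣ c ∧ (p : ℤ) ^ (t - rfun p + 1) ∣ d ∧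
        expEff f₂ f₃ c d (p ^ t) =
          (p : ℂ) ^ (t - rfun p + 1) *
            expEff f₂ f₃ (c / (p : ℤ) ^ (t - rfun p + 1)) (d / (p : ℤ) ^ (t - rfun p + 1))
              (p ^ (rfun p - 1))) := by
  by_cases hp2 : p = 2
  · subst hp2
    have hrfun : rfun 2 = 6 := by norm_num [rfun]
    rw [hrfun] at ht ⊢
    have hf21 : f₂ = 1 := by
      have h4 : 4 ∣ 2 ^ t := by
        have : (2:ℕ)^2 ∣ 2^t := pow_dvd_pow 2 (by omega)
        simpa using this
      have : w2 (2 ^ t) = 1 := by rw [w2, if_pos h4]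
      omega
    subst hf21
    simp only [expEff]
    exact master 2 Nat.prime_two 1 f₃ t 6 6 (t - 5) (by omega) ht (by omega) (by omega)
      (by omega) (by omega) (fun c' d' t' ht' hne => step_two f₃ c' d' t' ht' hne) c d
  · by_cases hp3 : p = 3
    · subst hp3
      have hrfun : rfun 3 = 5 := by norm_num [rfun]
      rw [hrfun] at ht ⊢
      have hf31 : f₃ = 1 := by
        have h9 : 9 ∣ 3 ^ t := by
          have : (3:ℕ)^2 ∣ 3^t := pow_dvd_pow 3 (by omega)
          simpa using this
        have : w3 (3 ^ t) = 1 := by rw [w3, if_pos h9]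
        omega
      subst hf31
      simp only [expEff]
      exact master 3 Nat.prime_three f₂ 1 t 5 4 (t - 3) (by omega) ht (by omega) (by omega)
        (by omega) (by omega) (fun c' d' t' ht' hne => step_three f₂ c' d' t' ht' hne) c d
    · have hrfun : rfun p = 2 := by simp [rfun, hp2, hp3]
      rw [hrfun] at ht ⊢
      simp only [expEff]
      exact master p hp f₂ f₃ t 2 2 (t - 1) (by omega) ht (by omega) (by omega)
        (by omega) (by omega) (fun c' d' t' ht' hne => step_big p hp hp2 hp3 f₂ f₃ c' d' t' ht' hne) c d
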